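/- Let a, b ∈ L(H) be projections of the same finite rank r, and suppose that aba is invertible in the unital algebra aL(H)a with unit a, i.e. there exists y ∈ L(H) with y = aya and (aba)y = y(aba) = a. Then there exists a self-adjoint u ∈ L(H) with au + ua = u such that exp(G(a,u)) applied to a equals b. -/

import Mathlib

variable {H : Type*} [NormedAddCommGroup H] [InnerProductSpace ℂ H] [CompleteSpace H]

/-- For a projection `a` and a self-adjoint `u` in `L(H)`, `G a u` is the bounded linear
operator on `L(H)` given by `z ↦ (ua - au)z - z(ua - au)`. -/
noncomputable def G (a u : H →L[ℂ] H) : (H →L[ℂ] H) →L[ℝ] (H →L[ℂ] H) :=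
  ContinuousLinearMap.mul ℝ (H →L[ℂ] H) (u * a - a * u)
    - (ContinuousLinearMap.mul ℝ (H →L[ℂ] H)).flip (u * a - a * u)

open NormedSpace

set_option maxHeartbeats 1000000

lemma slit_helper {z : ℂ} (h1 : ‖z‖ = 1) (h2 : z ≠ -1) : z ∈ Complex.slitPlane := by
  rw [Complex.mem_slitPlane_iff]
  rcases eq_or_ne z.im 0 with him | him
  · left
    have hsq : z.re ^ 2 = 1 := by
      have := Complex.sq_norm z
      rw [h1, Complex.normSq_apply, him] at this
      nlinarith [this]
    rcases sq_eq_one_iff.mp hsq with h3 | h3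
    · rw [h3]; norm_num
    · exfalso; apply h2; apply Complex.ext <;> simp [h3, him]
  · right; exact him


lemma isUnit_aux (a b : H →L[ℂ] H) (r : ℕ)
    (haidem : a * a = a)
    (hafin : FiniteDimensional ℂ (LinearMap.range (a : H →ₗ[ℂ] H)))
    (harank : Module.finrank ℂ (LinearMap.range (a : H →ₗ[ℂ] H)) = r)
    (hbfin : FiniteDimensional ℂ (LinearMap.range (b : H →ₗ[ℂ] H)))
    (hbrank : Module.finrank ℂ (LinearMap.range (b : H →ₗ[ℂ] H)) = r)
    (hasa : IsSelfAdjoint a) (hbsa : IsSelfAdjoint b)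
    (hbidem : b * b = b)
    (hinv : ∃ y : H →L[ℂ] H, y = a * y * a ∧ (a * b * a) * y = a ∧ y * (a * b * a) = a) :
    IsUnit (a + b - 1) := by
  obtain ⟨y, hy1, hy2, hy3⟩ := hinv
  have haa : ∀ x : H, a (a x) = a x := by
    intro x; exact congrArg (fun t : H →L[ℂ] H => t x) haidem
  have hbb : ∀ x : H, b (b x) = b x := by
    intro x; exact congrArg (fun t : H →L[ℂ] H => t x) hbidem
  set M := LinearMap.range (a : H →ₗ[ℂ] H) with hM
  set N := LinearMap.range (b : H →ₗ[ℂ] H) with hN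
  have haM : ∀ x : H, x ∈ M → a x = x := by
    rintro x ⟨z, rfl⟩; exact haa z
  have hbN : ∀ x : H, x ∈ N → b x = x := by
    rintro x ⟨z, rfl⟩; exact hbb z
  -- (i) : a x = x and b x = 0 implies x = 0
  have hi : ∀ x : H, a x = x → b x = 0 → x = 0 := by
    intro x hax hbx
    have h : y ((a * b * a) x) = a x := congrArg (fun t : H →L[ℂ] H => t x) hy3
    have h0 : (a * b * a) x = 0 := by
      simp only [ContinuousLinearMap.mul_apply, hax, hbx, map_zero]
    rw [h0, map_zero, hax] at h
    exact h.symm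
  have hyM : ∀ x : H, y x ∈ M := by
    intro x
    have h : y x = a ((y * a) x) := congrArg (fun t : H →L[ℂ] H => t x) hy1
    exact h ▸ LinearMap.mem_range_self _ _
  have haNM : ∀ x ∈ N, a x ∈ M := fun x _ => LinearMap.mem_range_self _ x
  set α : N →ₗ[ℂ] M := ((a : H →ₗ[ℂ] H)).restrict haNM with hα
  have hαsurj : Function.Surjective α := by
    intro m
    refine ⟨⟨b (y m), LinearMap.mem_range_self _ _⟩, Subtype.ext ?_⟩
    show a (b (y (m : H))) = (m : H)
    have hay : a (y (m : H)) = y (m : H) := haM _ (hyM _)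
    have h2 : a (b (a (y (m : H)))) = a (m : H) :=
      congrArg (fun t : H →L[ℂ] H => t (m : H)) hy2
    rw [hay] at h2
    rw [h2, haM _ m.2]
  have hαinj : Function.Injective α :=
    (LinearMap.injective_iff_surjective_of_finrank_eq_finrank
      (by rw [hbrank, harank])).mpr hαsurj
  -- (ii) : b x = x and a x = 0 implies x = 0
  have hii : ∀ x : H, b x = x → a x = 0 → x = 0 := by
    intro x hbx hax
    have hxN : x ∈ N := hbx ▸ LinearMap.mem_range_self _ x
    have : α ⟨x, hxN⟩ = 0 := by
      apply Subtype.ext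
      simpa [hα, LinearMap.restrict_apply] using hax
    have := hαinj (a₂ := 0) (by simpa using this)
    exact congrArg Subtype.val this
  -- T is injective
  set T : H →L[ℂ] H := a + b - 1 with hT
  have hTinj : ∀ x : H, T x = 0 → x = 0 := by
    intro x hx
    have hx' : a x + b x - x = 0 := by simpa [hT] using hx
    have h1 : a (b x) = 0 := by
      have := congrArg (fun z => a z) hx'
      simp only [map_sub, map_add, haa] at this
      simpa using this
    have hbx0 : b x = 0 := hii _ (hbb x) h1
    have hax : a x = x := by
      rw [hbx0] at hx'; simpa [sub_eq_zero] using hx'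
    exact hi x hax hbx0
  -- T * T = 1 - e with e = (a-b)^2 finite rank
  set e : H →L[ℂ] H := (a - b) * (a - b) with he
  have hTT : T * T = 1 - e := by
    simp only [hT, he]
    simp only [mul_sub, sub_mul, mul_add, add_mul, mul_one, one_mul, haidem, hbidem]
    abel
  have hesa : IsSelfAdjoint e := by
    simpa [he, sq] using (hasa.sub hbsa).pow 2
  -- range of e is finite dimensional
  have hKle : LinearMap.range (e : H →ₗ[ℂ] H) ≤ M ⊔ N := by
    rintro _ ⟨x, rfl⟩
    have : e x = a ((a - b) x) - b ((a - b) x) := by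
      simp [he, ContinuousLinearMap.mul_apply]
    rw [ContinuousLinearMap.coe_coe, this]
    exact sub_mem (Submodule.mem_sup_left (LinearMap.mem_range_self _ _))
      (Submodule.mem_sup_right (LinearMap.mem_range_self _ _))
  have hMN : FiniteDimensional ℂ (M ⊔ N : Submodule ℂ H) := by infer_instance
  set K := LinearMap.range (e : H →ₗ[ℂ] H) with hK
  have hKfin : FiniteDimensional ℂ K := Submodule.finiteDimensional_of_le hKle
  -- e vanishes on the orthogonal complement of K
  have heK : ∀ x ∈ K, e x ∈ K := fun x _ => LinearMap.mem_range_self _ _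
  have heO : ∀ x ∈ Kᗮ, e x = 0 := by
    intro x hx
    have h1 : (inner ℂ (e x) (e x) : ℂ) = inner ℂ (e (e x)) x := by
      rw [← ContinuousLinearMap.adjoint_inner_left e x (e x)]
      rw [← ContinuousLinearMap.star_eq_adjoint, hesa.star_eq]
    have h2 : (inner ℂ (e (e x)) x : ℂ) = 0 :=
      (Submodule.mem_orthogonal K x).mp hx _ (LinearMap.mem_range_self _ _)
    rw [h2] at h1
    exact inner_self_eq_zero.mp h1
  -- T ∘ T maps K to K
  have hTTK : ∀ x ∈ K, (T * T) x ∈ K := by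
    intro x hxK
    have : (T * T) x = x - e x := by
      rw [hTT]; simp [ContinuousLinearMap.sub_apply]
    rw [this]
    exact sub_mem hxK (heK x hxK)
  set τ : K →ₗ[ℂ] K := (((T * T) : H →L[ℂ] H) : H →ₗ[ℂ] H).restrict hTTK with hτ
  have hτinj : Function.Injective τ := by
    intro u v huv
    apply Subtype.ext
    have h : (T * T) (u : H) = (T * T) (v : H) := by
      have := congrArg Subtype.val huv
      simpa [hτ, LinearMap.restrict_apply] using this
    have h0 : T (T ((u : H) - (v : H))) = 0 := by
      have h1 : (T * T) ((u : H) - (v : H)) = 0 := by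
        rw [map_sub, h, sub_self]
      simpa [ContinuousLinearMap.mul_apply] using h1
    have h2 := hTinj _ (hTinj _ h0)
    exact sub_eq_zero.mp h2
  have hτsurj : Function.Surjective τ := LinearMap.injective_iff_surjective.mp hτinj
  -- T is surjective
  have hTsurj : Function.Surjective T := by
    intro z
    obtain ⟨zK, hzK, zO, hzO, rfl⟩ := K.exists_add_mem_mem_orthogonal z
    obtain ⟨x1, hx1⟩ := hτsurj ⟨zK, hzK⟩
    have hx1' : (T * T) (x1 : H) = zK := by
      have := congrArg Subtype.val hx1
      simpa [hτ, LinearMap.restrict_apply] using this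
    have hzO' : (T * T) zO = zO := by
      rw [hTT]
      simp [ContinuousLinearMap.sub_apply, heO zO hzO]
    refine ⟨T ((x1 : H) + zO), ?_⟩
    have : (T * T) ((x1 : H) + zO) = zK + zO := by
      rw [map_add, hx1', hzO']
    simpa [ContinuousLinearMap.mul_apply] using this
  -- conclude : T is a continuous linear equiv, hence a unit
  have hker : LinearMap.ker (T : H →ₗ[ℂ] H) = ⊥ := by
    rw [LinearMap.ker_eq_bot']
    intro x hx
    exact hTinj x hx
  have hrange : LinearMap.range (T : H →ₗ[ℂ] H) = ⊤ := LinearMap.range_eq_top.mpr hTsurj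
  set E := ContinuousLinearEquiv.ofBijective T hker hrange with hE
  refine ⟨⟨T, E.symm, ?_, ?_⟩, rfl⟩
  · ext x
    simp only [ContinuousLinearMap.mul_apply, ContinuousLinearMap.one_apply,
      ContinuousLinearMap.coe_coe]
    have : E (E.symm x) = x := E.apply_symm_apply x
    rwa [show ∀ w, E w = T w from fun w => congrFun (ContinuousLinearEquiv.coeFn_ofBijective T hker hrange) w] at this
  · ext x
    simp only [ContinuousLinearMap.mul_apply, ContinuousLinearMap.one_apply,
      ContinuousLinearMap.coe_coe]
    have : E.symm (E x) = x := E.symm_apply_apply x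
    rwa [show E x = T x from congrFun (ContinuousLinearEquiv.coeFn_ofBijective T hker hrange) x] at this

/-- Let `a, b ∈ L(H)` be projections of the same finite rank `r`, and
suppose `aba` is invertible in the unital algebra `aL(H)a` with unit `a`.  Then there is a
self-adjoint `u` with `au + ua = u` such that `exp(G(a,u)) a = b`. -/
theorem geodesic_joining_finite_rank_projections (a b : H →L[ℂ] H) (r : ℕ)
    (hasa : IsSelfAdjoint a) (haidem : a * a = a)
    (hafin : FiniteDimensional ℂ (LinearMap.range (a : H →ₗ[ℂ] H)))
    (harank : Module.finrank ℂ (LinearMap.range (a : H →ₗ[ℂ] H)) = r)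
    (hbsa : IsSelfAdjoint b) (hbidem : b * b = b)
    (hbfin : FiniteDimensional ℂ (LinearMap.range (b : H →ₗ[ℂ] H)))
    (hbrank : Module.finrank ℂ (LinearMap.range (b : H →ₗ[ℂ] H)) = r)
    (hinv : ∃ y : H →L[ℂ] H, y = a * y * a ∧ (a * b * a) * y = a ∧ y * (a * b * a) = a) :
    ∃ u : H →L[ℂ] H, IsSelfAdjoint u ∧ a * u + u * a = u ∧
      NormedSpace.exp (G a u) a = b := by
  have hT : IsUnit (a + b - 1) :=
    isUnit_aux a b r haidem hafin harank hbfin hbrank hasa hbsa hbidem hinv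
  set sa : H →L[ℂ] H := (2:ℂ) • a - 1 with hsa_def
  set sb : H →L[ℂ] H := (2:ℂ) • b - 1 with hsb_def
  have hsa_star : star sa = sa := by
    rw [hsa_def, star_sub, star_smul, hasa.star_eq, star_one]
    norm_num
  have hsb_star : star sb = sb := by
    rw [hsb_def, star_sub, star_smul, hbsa.star_eq, star_one]
    norm_num
  have hsa_sq : sa * sa = 1 := by
    rw [hsa_def]
    simp only [sub_mul, mul_sub, smul_mul_assoc, mul_smul_comm, mul_one, one_mul,
      haidem, smul_smul]
    module
  have hsb_sq : sb * sb = 1 := by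
    rw [hsb_def]
    simp only [sub_mul, mul_sub, smul_mul_assoc, mul_smul_comm, mul_one, one_mul,
      hbidem, smul_smul]
    module
  have hss : ∀ t : H →L[ℂ] H, sa * (sa * t) = t := fun t => by
    rw [← mul_assoc, hsa_sq, one_mul]
  set v : H →L[ℂ] H := sb * sa with hv_def
  have hv_star : star v = sa * sb := by rw [hv_def, star_mul, hsa_star, hsb_star]
  have hv_unit_l : star v * v = 1 := by
    rw [hv_star, hv_def, mul_assoc, ← mul_assoc sb sb sa, hsb_sq, one_mul, hsa_sq]
  have hv_unit_r : v * star v = 1 := by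
    rw [hv_star, hv_def, mul_assoc, ← mul_assoc sa sa sb, hsa_sq, one_mul, hsb_sq]
  have hvnormal : IsStarNormal v := ⟨by rw [Commute, SemiconjBy, hv_unit_l, hv_unit_r]⟩
  have hvmem : v ∈ unitary (H →L[ℂ] H) := ⟨hv_unit_l, hv_unit_r⟩
  have hσcirc : spectrum ℂ v ⊆ Metric.sphere 0 1 := spectrum.subset_circle_of_unitary hvmem
  -- -1 is not in the spectrum
  have hm1 : (-1 : ℂ) ∉ spectrum ℂ v := by
    apply spectrum.notMem_iff.mpr
    have h1 : algebraMap ℂ (H →L[ℂ] H) (-1) - v = -(1 + v) := by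
      rw [map_neg, map_one]; abel
    rw [h1]
    apply IsUnit.neg
    have h2 : 1 + v = ((2:ℂ) • (a + b - 1)) * sa := by
      rw [hv_def, hsa_def, hsb_def]
      simp only [sub_mul, add_mul, mul_sub, smul_mul_assoc, mul_smul_comm, one_mul,
        mul_one, smul_sub, smul_add, smul_smul, haidem]
      module
    rw [h2]
    have h3 : IsUnit sa := ⟨⟨sa, sa, hsa_sq, hsa_sq⟩, rfl⟩
    have h4 : IsUnit ((2:ℂ) • (a + b - 1)) := by
      rw [show ((2:ℂ) • (a + b - 1) : H →L[ℂ] H) = algebraMap ℂ _ 2 * (a + b - 1) from by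
        rw [Algebra.smul_def]]
      exact (IsUnit.map (algebraMap ℂ (H →L[ℂ] H)) (isUnit_iff_ne_zero.mpr two_ne_zero)).mul hT
    exact h4.mul h3
  -- pointwise spectrum facts
  have hσ : ∀ z ∈ spectrum ℂ v, ‖z‖ = 1 ∧ z ≠ -1 := by
    intro z hz
    refine ⟨?_, fun h => hm1 (h ▸ hz)⟩
    have := hσcirc hz
    simpa [Complex.dist_eq] using this
  have hslit : ∀ z ∈ spectrum ℂ v, z ∈ Complex.slitPlane :=
    fun z hz => slit_helper (hσ z hz).1 (hσ z hz).2
  have harg : ∀ z ∈ spectrum ℂ v, z.arg ≠ Real.pi := by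
    intro z hz hpi
    obtain ⟨habs, hne⟩ := hσ z hz
    rw [Complex.arg_eq_pi_iff] at hpi
    apply hne
    have hsq : z.re ^ 2 = 1 := by
      have := Complex.sq_norm z
      rw [habs, Complex.normSq_apply, hpi.2] at this
      nlinarith [this]
    have : z.re = -1 := by nlinarith [hpi.1, hsq]
    apply Complex.ext <;> simp [this, hpi.2]
  have hlog_cont : ContinuousOn Complex.log (spectrum ℂ v) :=
    fun z hz => (continuousAt_clog (hslit z hz)).continuousWithinAt
  have hlog_re : ∀ z ∈ spectrum ℂ v, (Complex.log z).re = 0 := by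
    intro z hz
    rw [Complex.log_re, (hσ z hz).1, Real.log_one]
  have hstar_log : ∀ z ∈ spectrum ℂ v, (starRingEnd ℂ) (Complex.log z) = -Complex.log z := by
    intro z hz
    apply Complex.ext <;> simp [hlog_re z hz]
  have hlog_conj : ∀ z ∈ spectrum ℂ v, Complex.log ((starRingEnd ℂ) z) = -Complex.log z := by
    intro z hz
    rw [Complex.log_conj z (harg z hz), hstar_log z hz]
  -- the logarithm w₀
  set w0 : H →L[ℂ] H := cfc Complex.log v with hw0_def
  have hw0star : star w0 = -w0 := by
    rw [hw0_def, ← cfc_star]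
    rw [show (fun z => star (Complex.log z)) = fun z => (starRingEnd ℂ) (Complex.log z) from rfl]
    rw [cfc_congr (fun z hz => hstar_log z hz), cfc_neg]
  have hexp0 : NormedSpace.exp w0 = v := by
    have hnorm : IsStarNormal w0 := hw0_def ▸ cfc_predicate _ _
    rw [← CFC.complex_exp_eq_normedSpace_exp, hw0_def]
    rw [← cfc_comp Complex.exp Complex.log v hvnormal
      (Complex.continuous_exp.continuousOn) hlog_cont]
    have : cfc (Complex.exp ∘ Complex.log) v = cfc (id : ℂ → ℂ) v := by
      apply cfc_congr
      intro z hz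
      have : z ≠ 0 := by
        intro h0
        have := (hσ z hz).1
        rw [h0] at this; simp at this
      simp [Function.comp, Complex.exp_log this]
    rw [this]
    exact cfc_id ℂ v hvnormal
  -- conjugation star-algebra homomorphism x ↦ sa * x * sa
  set φ : (H →L[ℂ] H) →⋆ₐ[ℂ] (H →L[ℂ] H) :=
    { toFun := fun x => sa * x * sa
      map_one' := by show sa * 1 * sa = 1; rw [mul_one, hsa_sq]
      map_mul' := fun x y => by
        show sa * (x * y) * sa = (sa * x * sa) * (sa * y * sa)
        simp only [mul_assoc, hss]
      map_zero' := by show sa * 0 * sa = 0; rw [mul_zero, zero_mul]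
      map_add' := fun x y => by
        show sa * (x + y) * sa = sa * x * sa + sa * y * sa
        rw [mul_add, add_mul]
      commutes' := fun c => by
        show sa * (algebraMap ℂ (H →L[ℂ] H) c) * sa = algebraMap ℂ (H →L[ℂ] H) c
        simp only [Algebra.algebraMap_eq_smul_one, smul_mul_assoc, mul_smul_comm,
          one_mul, mul_one, hsa_sq]
      map_star' := fun x => by
        show sa * star x * sa = star (sa * x * sa)
        rw [star_mul, star_mul, hsa_star, mul_assoc] } with hφ_def
  have hφcont : Continuous φ := by
    show Continuous fun x : H →L[ℂ] H => sa * x * sa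
    exact (continuous_const.mul continuous_id).mul continuous_const
  have hφv : φ v = star v := by
    show sa * (sb * sa) * sa = star v
    rw [hv_star, mul_assoc, mul_assoc, hsa_sq, mul_one]
  have hφvnormal : IsStarNormal (φ v) := by
    rw [hφv]
    infer_instance
  have hstarnormal : IsStarNormal (star v) := by infer_instance
  have hconj0 : sa * w0 * sa = -w0 := by
    have h1 : φ w0 = cfc Complex.log (φ v) := by
      rw [hw0_def]
      exact StarAlgHom.map_cfc φ Complex.log v hlog_cont hφcont hvnormal hφvnormal
    have h2 : cfc Complex.log (φ v) = cfc Complex.log (cfc (star · : ℂ → ℂ) v) := by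
      rw [hφv, ← cfc_star_id (R := ℂ) (a := v) (ha := hvnormal)]
    have h3 : cfc Complex.log (cfc (star · : ℂ → ℂ) v) =
        cfc (Complex.log ∘ (star · : ℂ → ℂ)) v := by
      refine (cfc_comp Complex.log (star · : ℂ → ℂ) v hvnormal ?_ ?_).symm
      · intro z hz
        obtain ⟨ζ, hζ, rfl⟩ := hz
        refine (continuousAt_clog (slit_helper ?_ ?_)).continuousWithinAt
        · show ‖(starRingEnd ℂ) ζ‖ = 1
          rw [Complex.norm_conj]
          exact (hσ ζ hζ).1
        · intro hc
          apply (hσ ζ hζ).2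
          have := congrArg (starRingEnd ℂ) hc
          simpa using this
      · exact continuous_star.continuousOn
    have h4 : cfc (Complex.log ∘ (star · : ℂ → ℂ)) v = cfc (fun z => -Complex.log z) v :=
      cfc_congr (fun z hz => hlog_conj z hz)
    have h5 : cfc (fun z => -Complex.log z) v = -w0 := by
      rw [cfc_neg, hw0_def]
    show sa * w0 * sa = -w0
    calc sa * w0 * sa = φ w0 := rfl
      _ = -w0 := by rw [h1, h2, h3, h4, h5]
  -- the generator w
  set w : H →L[ℂ] H := (2⁻¹ : ℂ) • w0 with hw_def
  have hwstar : star w = -w := by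
    rw [hw_def, star_smul, hw0star]
    simp
  have hconj : sa * w * sa = -w := by
    rw [hw_def, mul_smul_comm, smul_mul_assoc, hconj0, smul_neg]
  have hww : w + w = w0 := by
    rw [hw_def, ← add_smul]
    norm_num
  -- u
  set u : H →L[ℂ] H := w * a - a * w with hu_def
  have hasa' : a * sa = a := by
    rw [hsa_def, mul_sub, mul_smul_comm, haidem, mul_one]
    module
  have hsaa' : sa * a = a := by
    rw [hsa_def, sub_mul, smul_mul_assoc, haidem, one_mul]
    module
  have hawa : a * (w * a) = 0 := by
    have h2 : a * (w * a) = -(a * (w * a)) := by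
      calc a * (w * a) = a * sa * w * (sa * a) := by rw [hasa', hsaa', mul_assoc]
        _ = a * (sa * w * sa) * a := by simp only [mul_assoc]
        _ = a * (-w) * a := by rw [hconj]
        _ = -(a * (w * a)) := by simp only [mul_neg, neg_mul, mul_assoc]
    have h3 : (2 : ℂ) • (a * (w * a)) = 0 := by
      rw [two_smul]
      nth_rewrite 1 [h2]
      exact neg_add_cancel _
    simpa [smul_eq_zero] using h3
  have hanti : w * sa = -(sa * w) := by
    have h := congrArg (fun t => sa * t) hconj
    simp only [mul_neg, mul_assoc] at h
    rw [← mul_assoc sa sa, hsa_sq, one_mul] at h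
    exact h
  have haw_wa : a * w + w * a = w := by
    have h : (2:ℂ) • (w * a) - w = -((2:ℂ) • (a * w) - w) := by
      have h0 := hanti
      rw [hsa_def] at h0
      rw [mul_sub, sub_mul, mul_smul_comm, smul_mul_assoc, mul_one, one_mul] at h0
      exact h0
    have h2 : (2:ℂ) • (a * w + w * a) = (2:ℂ) • w := by
      rw [neg_sub] at h
      rw [smul_add]
      rw [sub_eq_iff_eq_add] at h
      rw [h]
      module
    have := smul_right_injective (H →L[ℂ] H) (two_ne_zero (α := ℂ)) h2
    exact this
  have hw_eq : u * a - a * u = w := by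
    rw [hu_def, sub_mul, mul_sub, mul_assoc w a a, haidem, mul_assoc a w a, hawa,
      ← mul_assoc a a w, haidem]
    rw [sub_zero, zero_sub, sub_neg_eq_add, add_comm]
    exact haw_wa
  have husa : IsSelfAdjoint u := by
    show star u = u
    rw [hu_def, star_sub, star_mul, star_mul, hasa.star_eq, hwstar]
    simp only [mul_neg, neg_mul, sub_neg_eq_add]
    abel
  have hua : a * u + u * a = u := by
    rw [hu_def, mul_sub, sub_mul, hawa, ← mul_assoc a a w, haidem, mul_assoc w a a, haidem,
      mul_assoc a w a, hawa]
    abel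
  -- the exponential computation
  let +nondep : NormedAlgebra ℚ (H →L[ℂ] H) := .restrictScalars ℚ ℂ _
  let +nondep : NormedAlgebra ℚ ((H →L[ℂ] H) →L[ℝ] (H →L[ℂ] H)) := .restrictScalars ℚ ℝ _
  set E : H →L[ℂ] H := NormedSpace.exp w with hE_def
  set E' : H →L[ℂ] H := NormedSpace.exp (-w) with hE'_def
  have hEE' : E * E' = 1 := by
    rw [hE_def, hE'_def, ← exp_add_of_commute ((Commute.refl w).neg_right),
      add_neg_cancel, exp_zero]
  have hEEv : E * E = v := by
    rw [hE_def, ← exp_add_of_commute (Commute.refl w), hww]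
    exact hexp0
  have hφE' : sa * E' * sa = E := by
    have h := map_exp φ hφcont (-w)
    have hφw : φ (-w) = w := by
      show sa * (-w) * sa = w
      rw [mul_neg, neg_mul, hconj, neg_neg]
    calc sa * E' * sa = φ E' := rfl
      _ = NormedSpace.exp (φ (-w)) := h
      _ = E := by rw [hφw, hE_def]
  have hE'eq : E' = sa * E * sa := by
    have h1 := congrArg (fun t => sa * t * sa) hφE'
    have h2 : sa * (sa * E' * sa) * sa = E' := by
      simp only [mul_assoc, hss, hsa_sq, mul_one]
    rw [← h2, h1]
  have hEsaE' : E * (sa * E') = sb := by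
    rw [hE'eq]
    have h3 : sa * (sa * E * sa) = E * sa := by simp only [mul_assoc, hss]
    rw [h3, ← mul_assoc, hEEv, hv_def, mul_assoc, hsa_sq, mul_one]
  -- left and right multiplication ring homs
  set Lhom : (H →L[ℂ] H) →+* ((H →L[ℂ] H) →L[ℝ] (H →L[ℂ] H)) :=
    { toFun := fun x => ContinuousLinearMap.mul ℝ (H →L[ℂ] H) x
      map_one' := by ext z; simp
      map_mul' := fun x y => by ext z; simp [mul_assoc]
      map_zero' := by ext z; simp
      map_add' := fun x y => by ext z; simp [add_mul] } with hLhom_def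
  set Rhom : (H →L[ℂ] H)ᵐᵒᵖ →+* ((H →L[ℂ] H) →L[ℝ] (H →L[ℂ] H)) :=
    { toFun := fun x => (ContinuousLinearMap.mul ℝ (H →L[ℂ] H)).flip x.unop
      map_one' := by ext z; simp
      map_mul' := fun x y => by ext z; simp [mul_assoc]
      map_zero' := by ext z; simp
      map_add' := fun x y => by ext z; simp [mul_add] } with hRhom_def
  have hLcont : Continuous Lhom := (ContinuousLinearMap.mul ℝ (H →L[ℂ] H)).continuous
  have hRcont : Continuous Rhom :=
    (ContinuousLinearMap.mul ℝ (H →L[ℂ] H)).flip.continuous.comp MulOpposite.continuous_unop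
  have hGdef : G a u = Lhom w + Rhom (MulOpposite.op (-w)) := by
    have h0 : G a u = ContinuousLinearMap.mul ℝ (H →L[ℂ] H) (u * a - a * u)
        - (ContinuousLinearMap.mul ℝ (H →L[ℂ] H)).flip (u * a - a * u) := rfl
    rw [h0, hw_eq, sub_eq_add_neg]
    congr 1
    show -((ContinuousLinearMap.mul ℝ (H →L[ℂ] H)).flip w)
      = (ContinuousLinearMap.mul ℝ (H →L[ℂ] H)).flip (-w)
    rw [map_neg]
  have hcomm : Commute (Lhom w) (Rhom (MulOpposite.op (-w))) := by
    show _ * _ = _ * _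
    ext z
    simp only [hLhom_def, hRhom_def, RingHom.coe_mk, MonoidHom.coe_mk, OneHom.coe_mk,
      ContinuousLinearMap.mul_apply, ContinuousLinearMap.mul_apply',
      ContinuousLinearMap.flip_apply, MulOpposite.unop_op, mul_assoc]
  have hexpG : NormedSpace.exp (G a u) = Lhom E * Rhom (MulOpposite.op E') := by
    rw [hGdef, exp_add_of_commute hcomm, ← map_exp Lhom hLcont, ← map_exp Rhom hRcont,
      exp_op, hE_def, hE'_def]
  have hfinal : NormedSpace.exp (G a u) a = b := by
    have h1 : NormedSpace.exp (G a u) a = E * (a * E') := by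
      rw [hexpG]
      simp only [hLhom_def, hRhom_def, RingHom.coe_mk, MonoidHom.coe_mk, OneHom.coe_mk,
        ContinuousLinearMap.mul_apply, ContinuousLinearMap.mul_apply',
        ContinuousLinearMap.flip_apply, MulOpposite.unop_op]
    rw [h1]
    have ha_eq : a = (2⁻¹ : ℂ) • (sa + 1) := by rw [hsa_def]; module
    have hb_eq : (2⁻¹ : ℂ) • (sb + 1) = b := by rw [hsb_def]; module
    calc E * (a * E') = (2⁻¹ : ℂ) • (E * ((sa + 1) * E')) := by
          rw [ha_eq, smul_mul_assoc, mul_smul_comm]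
      _ = (2⁻¹ : ℂ) • (E * (sa * E') + E * E') := by rw [add_mul, one_mul, mul_add]
      _ = (2⁻¹ : ℂ) • (sb + 1) := by rw [hEsaE', hEE']
      _ = b := hb_eq
  exact ⟨u, husa, hua, hfinal⟩
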